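/- Two ω-regular languages L₁, L₂ ⊆ Σ^ω are not DBW-separable if and only if there exist finite words x ∈ Σ* and x₁, x₂ ∈ Σ⁺ such that x·(x₁+x₂)*·x₁^ω ⊆ L₁ and x·(x₁*·x₂)^ω ⊆ L₂. -/

import Mathlib

structure DetAuto (α : Type) where
  Q : Type
  [fin : Fintype Q]
  init : Q
  δ : Q → α → Q

attribute [instance] DetAuto.fin

/-- The run of a deterministic automaton on an infinite word. -/
def DetAuto.run {α : Type} (M : DetAuto α) (x : ℕ → α) : ℕ → M.Q
  | 0 => M.init
  | n + 1 => M.δ (M.run x n) (x n)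

/-- Parity acceptance: the maximal color occurring infinitely often in the run is odd. -/
def ParityAccept {α : Type} (M : DetAuto α) (c : M.Q → ℕ) (x : ℕ → α) : Prop :=
  ∃ m, Odd m ∧ (∃ᶠ n in Filter.atTop, c (M.run x n) = m) ∧
    ∀ m', (∃ᶠ n in Filter.atTop, c (M.run x n) = m') → m' ≤ m

/-- A language is ω-regular iff it is recognized by some deterministic parity automaton. -/
def OmegaRegular {α : Type} (L : Set (ℕ → α)) : Prop :=
  ∃ (M : DetAuto α) (c : M.Q → ℕ), ∀ x, x ∈ L ↔ ParityAccept M c x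

/-- A language is DBW-recognizable iff some deterministic Büchi automaton recognizes it. -/
def DBWRecognizable {α : Type} (L : Set (ℕ → α)) : Prop :=
  ∃ (M : DetAuto α) (acc : Set M.Q), ∀ x, x ∈ L ↔ ∃ᶠ n in Filter.atTop, M.run x n ∈ acc

/-- `u` is a prefix of the infinite word `w`. -/
def HasPrefixWord {α : Type} (w : ℕ → α) (u : List α) : Prop :=
  ∀ i : Fin u.length, w i.1 = u.get i

/-- The ω-language `x·(x₁+x₂)*·x₁^ω`. -/
def LangA {α : Type} (x x₁ x₂ : List α) : Set (ℕ → α) :=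
  { w | ∃ ws : List (List α), (∀ u ∈ ws, u = x₁ ∨ u = x₂) ∧
        ∀ n, HasPrefixWord w (x ++ ws.flatten ++ (List.replicate n x₁).flatten) }

/-- The ω-language `x·(x₁*·x₂)^ω`. -/
def LangB {α : Type} (x x₁ x₂ : List α) : Set (ℕ → α) :=
  { w | ∃ j : ℕ → ℕ, ∀ n, HasPrefixWord w
        (x ++ ((List.range n).map (fun i => (List.replicate (j i) x₁).flatten ++ x₂)).flatten) }

def DBWSeparable {α : Type} (L₁ L₂ : Set (ℕ → α)) : Prop :=
  ∃ L : Set (ℕ → α), DBWRecognizable L ∧ L₁ ⊆ L ∧ L ∩ L₂ = ∅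

namespace Sep

variable {α : Type} {Q : Type}

/-- extended transition -/
def drv (δ : Q → α → Q) (p : Q) (u : List α) : Q := u.foldl δ p

@[simp] lemma drv_nil (δ : Q → α → Q) (p : Q) : drv δ p [] = p := rfl
@[simp] lemma drv_cons (δ : Q → α → Q) (p : Q) (a : α) (u : List α) :
    drv δ p (a :: u) = drv δ (δ p a) u := rfl
@[simp] lemma drv_append (δ : Q → α → Q) (p : Q) (u v : List α) :
    drv δ p (u ++ v) = drv δ (drv δ p u) v := List.foldl_append

/-- states visited along a word (after each letter) -/
def sts (δ : Q → α → Q) : Q → List α → List Q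
  | _, [] => []
  | p, a :: u => δ p a :: sts δ (δ p a) u

@[simp] lemma sts_nil (δ : Q → α → Q) (p : Q) : sts δ p [] = [] := rfl
@[simp] lemma sts_cons (δ : Q → α → Q) (p : Q) (a : α) (u : List α) :
    sts δ p (a :: u) = δ p a :: sts δ (δ p a) u := rfl

@[simp] lemma sts_append (δ : Q → α → Q) (p : Q) (u v : List α) :
    sts δ p (u ++ v) = sts δ p u ++ sts δ (drv δ p u) v := by
  induction u generalizing p with
  | nil => simp
  | cons a u ih => simp [ih]

lemma sts_length (δ : Q → α → Q) (p : Q) (u : List α) : (sts δ p u).length = u.length := by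
  induction u generalizing p with
  | nil => rfl
  | cons a u ih => simp [ih]

lemma drv_take_mem_sts (δ : Q → α → Q) (p : Q) (u : List α) {r : ℕ}
    (h0 : 0 < r) (hr : r ≤ u.length) : drv δ p (u.take r) ∈ sts δ p u := by
  induction u generalizing p r with
  | nil => simp at hr; omega
  | cons a u ih =>
    match r, h0 with
    | 1, _ =>
      cases u with
      | nil => simp
      | cons b u => simp
    | (r+2), _ =>
      have : drv δ p ((a :: u).take (r+2)) = drv δ (δ p a) (u.take (r+1)) := by simp
      rw [this]
      exact List.mem_cons_of_mem _ (ih (δ p a) (by omega) (by simpa using hr))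

lemma mem_sts_drv_take (δ : Q → α → Q) (p : Q) (u : List α) {s : Q}
    (hs : s ∈ sts δ p u) : ∃ r, 0 < r ∧ r ≤ u.length ∧ s = drv δ p (u.take r) := by
  induction u generalizing p with
  | nil => simp at hs
  | cons a u ih =>
    rcases List.mem_cons.mp hs with h | h
    · exact ⟨1, by omega, by simp, by simp [h]⟩
    · obtain ⟨r, h0, hr, he⟩ := ih (δ p a) h
      exact ⟨r + 1, by omega, by simp; omega, by simpa using he⟩

/-- max of a list of naturals -/
def mx (l : List ℕ) : ℕ := l.foldr max 0

lemma le_mx {l : List ℕ} {x : ℕ} (h : x ∈ l) : x ≤ mx l := by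
  induction l with
  | nil => simp at h
  | cons a l ih =>
    rcases List.mem_cons.mp h with h | h
    · simp [mx, h]
    · have := ih h; simp [mx] at this ⊢; omega

lemma mx_mem {l : List ℕ} (h : l ≠ []) : mx l ∈ l := by
  induction l with
  | nil => simp at h
  | cons a l ih =>
    cases l with
    | nil => simp [mx]
    | cons b t =>
      rcases le_total (mx (b :: t)) a with hle | hle
      · have : mx (a :: b :: t) = a := by simp [mx] at hle ⊢; omega
        simp [this]
      · have : mx (a :: b :: t) = mx (b :: t) := by simp [mx] at hle ⊢; omega
        rw [this]
        exact List.mem_cons_of_mem _ (ih (by simp))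

lemma mx_le {l : List ℕ} {m : ℕ} (h : ∀ x ∈ l, x ≤ m) : mx l ≤ m := by
  induction l with
  | nil => simp [mx]
  | cons a l ih =>
    have h1 := h a (by simp)
    have h2 := ih (fun x hx => h x (List.mem_cons_of_mem _ hx))
    simp [mx] at h2 ⊢; omega

lemma mx_append (l₁ l₂ : List ℕ) : mx (l₁ ++ l₂) = max (mx l₁) (mx l₂) := by
  induction l₁ with
  | nil => simp [mx]
  | cons a l ih => simp [mx] at ih ⊢; omega

lemma mx_eq_of (l : List ℕ) (d : ℕ) (hmem : d ∈ l) (hle : ∀ x ∈ l, x ≤ d) : mx l = d :=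
  le_antisymm (mx_le hle) (le_mx hmem)

/-- max color along a word -/
def mxC (c : Q → ℕ) (δ : Q → α → Q) (p : Q) (u : List α) : ℕ := mx ((sts δ p u).map c)

lemma mxC_append (c : Q → ℕ) (δ : Q → α → Q) (p : Q) (u v : List α) :
    mxC c δ p (u ++ v) = max (mxC c δ p u) (mxC c δ (drv δ p u) v) := by
  simp [mxC, mx_append]

/-- segment of an infinite word -/
def seg (w : ℕ → α) : ℕ → ℕ → List α
  | _, 0 => []
  | n, k + 1 => w n :: seg w (n + 1) k

@[simp] lemma seg_zero (w : ℕ → α) (n : ℕ) : seg w n 0 = [] := rfl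
@[simp] lemma seg_succ (w : ℕ → α) (n k : ℕ) : seg w n (k+1) = w n :: seg w (n+1) k := rfl

@[simp] lemma seg_length (w : ℕ → α) (n k : ℕ) : (seg w n k).length = k := by
  induction k generalizing n with
  | zero => rfl
  | succ k ih => simp [ih]

lemma seg_add (w : ℕ → α) (n k l : ℕ) : seg w n (k + l) = seg w n k ++ seg w (n + k) l := by
  induction k generalizing n with
  | zero => simp
  | succ k ih =>
    have : n + (k+1) = (n+1) + k := by omega
    simp [show k + 1 + l = (k + l) + 1 by omega, ih, this]

lemma seg_take (w : ℕ → α) (n k r : ℕ) (h : r ≤ k) : (seg w n k).take r = seg w n r := by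
  have : k = r + (k - r) := by omega
  rw [this, seg_add, List.take_append]
  simp

lemma seg_getElem (w : ℕ → α) (n k i : ℕ) (h : i < (seg w n k).length) :
    (seg w n k)[i] = w (n + i) := by
  induction k generalizing n i with
  | zero => simp at h
  | succ k ih =>
    cases i with
    | zero => simp
    | succ i =>
      simp only [seg_succ, List.getElem_cons_succ]
      rw [ih _ _ (by simp at h ⊢; omega)]
      ring_nf

end Sep

namespace Sep

variable {α : Type}

lemma run_drv (M : DetAuto α) (w : ℕ → α) (n k : ℕ) :
    M.run w (n + k) = drv M.δ (M.run w n) (seg w n k) := by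
  induction k with
  | zero => simp
  | succ k ih =>
    have : seg w n (k+1) = seg w n k ++ [w (n+k)] := by
      rw [show k+1 = k+1 from rfl, seg_add w n k 1]; rfl
    rw [show n + (k+1) = (n+k)+1 from rfl, this]
    simp only [drv_append, ← ih]
    rfl

lemma run_eq_drv (M : DetAuto α) (w : ℕ → α) (n : ℕ) :
    M.run w n = drv M.δ M.init (seg w 0 n) := by
  have := run_drv M w 0 n
  simpa [DetAuto.run] using this

lemma run_mem_sts (M : DetAuto α) (w : ℕ → α) {n t k : ℕ} (h1 : n < t) (h2 : t ≤ n + k) :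
    M.run w t ∈ sts M.δ (M.run w n) (seg w n k) := by
  have : M.run w t = drv M.δ (M.run w n) ((seg w n k).take (t - n)) := by
    rw [seg_take w n k (t-n) (by omega)]
    have := run_drv M w n (t - n)
    rw [show n + (t-n) = t by omega] at this
    exact this
  rw [this]
  exact drv_take_mem_sts _ _ _ (by omega) (by simp; omega)

lemma sts_run_mem (M : DetAuto α) (w : ℕ → α) {n k : ℕ} {s : M.Q}
    (hs : s ∈ sts M.δ (M.run w n) (seg w n k)) : ∃ t, n < t ∧ t ≤ n + k ∧ s = M.run w t := by
  obtain ⟨r, h0, hr, he⟩ := mem_sts_drv_take _ _ _ hs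
  simp at hr
  refine ⟨n + r, by omega, by omega, ?_⟩
  rw [he, seg_take w n k r hr, ← run_drv]

lemma run_congr (M : DetAuto α) {w w' : ℕ → α} {n : ℕ} (h : ∀ i < n, w i = w' i) :
    M.run w n = M.run w' n := by
  induction n with
  | zero => rfl
  | succ n ih =>
    show M.δ (M.run w n) (w n) = M.δ (M.run w' n) (w' n)
    rw [ih (fun i hi => h i (by omega)), h n (by omega)]

/-- HasPrefixWord gives values -/
lemma prefix_val {w : ℕ → α} {L : List α} (h : HasPrefixWord w L) {i : ℕ} (hi : i < L.length) :
    w i = L[i] := h ⟨i, hi⟩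

lemma prefix_run (M : DetAuto α) {w : ℕ → α} {L : List α} (h : HasPrefixWord w L)
    {n : ℕ} (hn : n ≤ L.length) : M.run w n = drv M.δ M.init (L.take n) := by
  rw [run_eq_drv]
  congr 1
  apply List.ext_getElem (by simp; omega)
  intro i hi1 hi2
  rw [seg_getElem _ _ _ _ hi1]
  have hiL : i < L.length := by simp only [List.length_take] at hi2; omega
  have hv := prefix_val h hiL
  simp only [zero_add, List.getElem_take]
  exact hv

/-- the product automaton -/
def prodA (M₁ M₂ : DetAuto α) : DetAuto α where
  Q := M₁.Q × M₂.Q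
  init := (M₁.init, M₂.init)
  δ := fun p a => (M₁.δ p.1 a, M₂.δ p.2 a)

@[simp] lemma prodA_run (M₁ M₂ : DetAuto α) (w : ℕ → α) (n : ℕ) :
    (prodA M₁ M₂).run w n = (M₁.run w n, M₂.run w n) := by
  induction n with
  | zero => rfl
  | succ n ih =>
    show (prodA M₁ M₂).δ ((prodA M₁ M₂).run w n) (w n) = _
    rw [ih]; rfl

@[simp] lemma prodA_drv_fst (M₁ M₂ : DetAuto α) (p : (prodA M₁ M₂).Q) (u : List α) :
    (drv (prodA M₁ M₂).δ p u).1 = drv M₁.δ p.1 u := by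
  induction u generalizing p with
  | nil => rfl
  | cons a u ih => simp [ih]; rfl

@[simp] lemma prodA_drv_snd (M₁ M₂ : DetAuto α) (p : (prodA M₁ M₂).Q) (u : List α) :
    (drv (prodA M₁ M₂).δ p u).2 = drv M₂.δ p.2 u := by
  induction u generalizing p with
  | nil => rfl
  | cons a u ih => simp [ih]; rfl

end Sep

namespace Sep

open Filter

variable {α : Type}

lemma freq_ge {p : ℕ → Prop} (h : ∃ᶠ n in atTop, p n) (N : ℕ) : ∃ n, N ≤ n ∧ p n := by
  obtain ⟨n, hn, hp⟩ := Filter.frequently_atTop.mp h N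
  exact ⟨n, hn, hp⟩

lemma colors_le (M : DetAuto α) (c : M.Q → ℕ) (w : ℕ → α) (d : ℕ)
    (hbound : ∀ m', (∃ᶠ n in atTop, c (M.run w n) = m') → m' ≤ d) :
    ∃ N, ∀ n, N ≤ n → c (M.run w n) ≤ d := by
  have key : ∀ᶠ n in atTop, ∀ v ∈ (Finset.image c Finset.univ).filter (fun v => d < v),
      c (M.run w n) ≠ v := by
    rw [Filter.eventually_all_finset]
    intro v hv
    simp only [Finset.mem_filter] at hv
    have : ¬ (∃ᶠ n in atTop, c (M.run w n) = v) := fun hf => by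
      have := hbound v hf; omega
    simpa using (Filter.not_frequently.mp this)
  obtain ⟨N, hN⟩ := Filter.eventually_atTop.mp key
  refine ⟨N, fun n hn => ?_⟩
  by_contra hgt
  push_neg at hgt
  exact hN n hn (c (M.run w n))
    (by simp only [Finset.mem_filter]; exact ⟨Finset.mem_image_of_mem c (Finset.mem_univ _), hgt⟩) rfl

lemma pigeon_freq {Q : Type} [Fintype Q] (f : ℕ → Q) (p : ℕ → Prop)
    (h : ∃ᶠ n in atTop, p n) : ∃ q, ∃ᶠ n in atTop, p n ∧ f n = q := by
  by_contra hc
  push_neg at hc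
  have hev : ∀ᶠ n in atTop, ∀ q ∈ (Finset.univ : Finset Q), ¬(p n ∧ f n = q) := by
    rw [Filter.eventually_all_finset]
    intro q _
    simpa using hc q
  obtain ⟨n, hp, hall⟩ := (h.and_eventually hev).exists
  exact hall (f n) (Finset.mem_univ _) ⟨hp, rfl⟩

end Sep

namespace Sep

open Filter

variable {α : Type}

lemma hasPrefixWord_iff {w : ℕ → α} {L : List α} :
    HasPrefixWord w L ↔ ∀ i : ℕ, ∀ h : i < L.length, w i = L[i] := by
  constructor
  · intro h i hi; exact h ⟨i, hi⟩
  · intro h i; exact h i.1 i.2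

lemma hasPrefixWord_mono {w : ℕ → α} {L L' : List α} (h : HasPrefixWord w L')
    (hp : L <+: L') : HasPrefixWord w L := by
  rw [hasPrefixWord_iff] at h ⊢
  intro i hi
  rw [h i (lt_of_lt_of_le hi hp.length_le), List.IsPrefix.getElem hp hi]

/-- infinite word from a chain of prefixes -/
def wordOf (P : ℕ → List α) (d : α) : ℕ → α := fun n => (P (n+1)).getD n d

lemma chain_prefix {P : ℕ → List α} (hchain : ∀ n, P n <+: P (n+1)) :
    ∀ {a b}, a ≤ b → P a <+: P b := by
  intro a b hab
  induction b, hab using Nat.le_induction with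
  | base => exact List.prefix_refl _
  | succ b _ ih => exact ih.trans (hchain b)

lemma wordOf_prefix {P : ℕ → List α} (d : α) (hchain : ∀ n, P n <+: P (n+1))
    (hlen : ∀ n, n ≤ (P n).length) : ∀ m, HasPrefixWord (wordOf P d) (P m) := by
  intro m
  rw [hasPrefixWord_iff]
  intro i hi
  have hi1 : i < (P (i+1)).length := lt_of_lt_of_le (by omega) (hlen (i+1))
  show (P (i+1)).getD i d = (P m)[i]
  rw [List.getD_eq_getElem _ _ hi1]
  rcases le_total m (i+1) with hm | hm
  · rw [List.IsPrefix.getElem (chain_prefix hchain hm) hi]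
  · rw [List.IsPrefix.getElem (chain_prefix hchain hm) hi1]

lemma flatten_replicate_length (u : List α) (n : ℕ) :
    ((List.replicate n u).flatten).length = n * u.length := by
  induction n with
  | zero => simp
  | succ n ih => simp only [List.replicate_succ, List.flatten_cons, List.length_append, ih]; ring

lemma flatten_replicate_succ (u : List α) (n : ℕ) :
    (List.replicate (n+1) u).flatten = (List.replicate n u).flatten ++ u := by
  rw [List.replicate_succ', List.flatten_append]; simp

/-- prefix lists for LangA words -/
def PA (x x₁ : List α) (ws : List (List α)) (n : ℕ) : List α :=
  x ++ ws.flatten ++ (List.replicate n x₁).flatten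

lemma PA_chain (x x₁ : List α) (ws : List (List α)) (n : ℕ) :
    PA x x₁ ws n <+: PA x x₁ ws (n+1) := by
  unfold PA
  rw [flatten_replicate_succ, ← List.append_assoc]
  exact List.prefix_append _ _

lemma PA_len (x x₁ : List α) (hx₁ : x₁ ≠ []) (ws : List (List α)) (n : ℕ) :
    n ≤ (PA x x₁ ws n).length := by
  unfold PA
  simp only [List.length_append, flatten_replicate_length]
  have : 1 ≤ x₁.length := List.length_pos_iff.mpr hx₁
  nlinarith

lemma wordOf_PA_mem (x x₁ x₂ : List α) (hx₁ : x₁ ≠ []) (d : α) (ws : List (List α))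
    (hws : ∀ u ∈ ws, u = x₁ ∨ u = x₂) :
    wordOf (PA x x₁ ws) d ∈ LangA x x₁ x₂ :=
  ⟨ws, hws, wordOf_prefix d (PA_chain x x₁ ws) (PA_len x x₁ hx₁ ws)⟩

/-- prefix lists for LangB words -/
def PB (x x₁ x₂ : List α) (j : ℕ → ℕ) (n : ℕ) : List α :=
  x ++ ((List.range n).map (fun i => (List.replicate (j i) x₁).flatten ++ x₂)).flatten

lemma PB_succ (x x₁ x₂ : List α) (j : ℕ → ℕ) (n : ℕ) :
    PB x x₁ x₂ j (n+1) = PB x x₁ x₂ j n ++ ((List.replicate (j n) x₁).flatten ++ x₂) := by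
  unfold PB
  rw [List.range_succ, List.map_append, List.flatten_append]
  simp

lemma PB_chain (x x₁ x₂ : List α) (j : ℕ → ℕ) (n : ℕ) :
    PB x x₁ x₂ j n <+: PB x x₁ x₂ j (n+1) := by
  rw [PB_succ]; exact List.prefix_append _ _

lemma PB_len (x x₁ x₂ : List α) (hx₂ : x₂ ≠ []) (j : ℕ → ℕ) (n : ℕ) :
    n ≤ (PB x x₁ x₂ j n).length := by
  induction n with
  | zero => omega
  | succ n ih =>
    rw [PB_succ]
    have : 1 ≤ x₂.length := List.length_pos_iff.mpr hx₂
    simp only [List.length_append]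
    omega

lemma wordOf_PB_mem (x x₁ x₂ : List α) (hx₂ : x₂ ≠ []) (d : α) (j : ℕ → ℕ) :
    wordOf (PB x x₁ x₂ j) d ∈ LangB x x₁ x₂ :=
  ⟨j, wordOf_prefix d (PB_chain x x₁ x₂ j) (PB_len x x₁ x₂ hx₂ j)⟩

end Sep

namespace Sep

open Filter

variable {α : Type}

/-- iterative construction of block lists -/
def cStep (x₁ x₂ : List α) (pick : List (List α) → ℕ → ℕ) : ℕ → List (List α) × ℕ
  | 0 => ([], 0)
  | k+1 =>
    let p := cStep x₁ x₂ pick k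
    let m := pick p.1 p.2
    (p.1 ++ (List.replicate m x₁ ++ [x₂]), m + 1)

lemma cStep_blocks (x₁ x₂ : List α) (pick : List (List α) → ℕ → ℕ) (k : ℕ) :
    ∀ u ∈ (cStep x₁ x₂ pick k).1, u = x₁ ∨ u = x₂ := by
  induction k with
  | zero => intro u hu; simp [cStep] at hu
  | succ k ih =>
    intro u hu
    simp only [cStep, List.mem_append, List.mem_cons] at hu
    rcases hu with h | h
    · exact ih u h
    · rcases h with h | h | h
      · exact Or.inl (List.eq_of_mem_replicate h)
      · exact Or.inr h
      · simp at h

lemma cStep_flatten (x x₁ x₂ : List α) (pick : List (List α) → ℕ → ℕ) (k : ℕ) :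
    x ++ ((cStep x₁ x₂ pick k).1).flatten
      = PB x x₁ x₂ (fun i => pick (cStep x₁ x₂ pick i).1 (cStep x₁ x₂ pick i).2) k := by
  induction k with
  | zero => simp [cStep, PB]
  | succ k ih =>
    rw [PB_succ, ← ih]
    simp [cStep, List.flatten_append, List.append_assoc]

lemma pattern_not_sep (x x₁ x₂ : List α) (hx₁ : x₁ ≠ []) (hx₂ : x₂ ≠ [])
    (L₁ L₂ L : Set (ℕ → α)) (hA : LangA x x₁ x₂ ⊆ L₁) (hB : LangB x x₁ x₂ ⊆ L₂)
    (M : DetAuto α) (acc : Set M.Q) (hM : ∀ y, y ∈ L ↔ ∃ᶠ n in atTop, M.run y n ∈ acc)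
    (hL₁ : L₁ ⊆ L) (hL₂ : L ∩ L₂ = ∅) : False := by
  classical
  set d : α := x₁.head hx₁ with hd
  have step : ∀ ws : List (List α), (∀ u ∈ ws, u = x₁ ∨ u = x₂) → ∀ N : ℕ,
      ∃ m, N ≤ m ∧ M.run (wordOf (PA x x₁ ws) d) m ∈ acc := by
    intro ws hws N
    have hmem := wordOf_PA_mem x x₁ x₂ hx₁ d ws hws
    have hfreq := (hM _).mp (hL₁ (hA hmem))
    obtain ⟨m, hm, hacc⟩ := freq_ge hfreq N
    exact ⟨m, hm, hacc⟩
  set pick : List (List α) → ℕ → ℕ := fun ws N =>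
    if h : ∀ u ∈ ws, u = x₁ ∨ u = x₂ then (step ws h N).choose else 0 with hpick
  set cs := cStep x₁ x₂ pick with hcs
  have pickspec : ∀ k : ℕ, (cs k).2 ≤ pick (cs k).1 (cs k).2 ∧
      M.run (wordOf (PA x x₁ (cs k).1) d) (pick (cs k).1 (cs k).2) ∈ acc := by
    intro k
    have hb := cStep_blocks x₁ x₂ pick k
    have : pick (cs k).1 (cs k).2 = (step (cs k).1 hb ((cs k).2)).choose := by
      rw [hpick]; simp only [hcs]; rw [dif_pos hb]
    rw [this]
    obtain ⟨h1, h2⟩ := (step (cs k).1 hb ((cs k).2)).choose_spec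
    exact ⟨h1, h2⟩
  have hn : ∀ k, k ≤ (cs k).2 := by
    intro k
    induction k with
    | zero => omega
    | succ k ih =>
      have := (pickspec k).1
      show k + 1 ≤ (cStep x₁ x₂ pick (k+1)).2
      simp only [cStep, ← hcs]
      omega
  set jf : ℕ → ℕ := fun i => pick (cs i).1 (cs i).2 with hjf
  set w := wordOf (PB x x₁ x₂ jf) d with hw
  have hwB : w ∈ L₂ := hB (wordOf_PB_mem x x₁ x₂ hx₂ d jf)
  have hmark : ∀ k, M.run w (jf k) ∈ acc := by
    intro k
    set ws := (cs k).1
    set m := jf k with hm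
    have hflat : x ++ ws.flatten = PB x x₁ x₂ jf k := cStep_flatten x x₁ x₂ pick k
    set Lc := PA x x₁ ws m with hLc
    have hpre1 : HasPrefixWord (wordOf (PA x x₁ ws) d) Lc :=
      wordOf_prefix d (PA_chain x x₁ ws) (PA_len x x₁ hx₁ ws) m
    have hPBsucc : PB x x₁ x₂ jf (k+1) = Lc ++ x₂ := by
      rw [PB_succ, ← hflat, hLc]
      unfold PA
      simp [List.append_assoc, hm]
    have hpre2 : HasPrefixWord w Lc := by
      apply hasPrefixWord_mono (wordOf_prefix d (PB_chain x x₁ x₂ jf) (PB_len x x₁ x₂ hx₂ jf) (k+1))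
      exact ⟨x₂, hPBsucc.symm⟩
    have hmlen : m ≤ Lc.length := PA_len x x₁ hx₁ ws m
    have e1 := prefix_run M hpre1 hmlen
    have e2 := prefix_run M hpre2 hmlen
    rw [e2, ← e1]
    exact (pickspec k).2
  have hwL : w ∈ L := by
    rw [hM]
    rw [Filter.frequently_atTop]
    intro N
    refine ⟨jf N, ?_, hmark N⟩
    have := (pickspec N).1
    have := hn N
    simp only [hjf]
    omega
  exact Set.eq_empty_iff_forall_notMem.mp hL₂ w ⟨hwL, hwB⟩

end Sep

namespace Sep

open Filter

variable {α : Type} {Q : Type}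

lemma drv_flatten_loop (δ : Q → α → Q) (s : Q) (ws : List (List α))
    (h : ∀ b ∈ ws, drv δ s b = s) : drv δ s ws.flatten = s := by
  induction ws with
  | nil => rfl
  | cons b ws ih =>
    rw [List.flatten_cons, drv_append, h b (by simp)]
    exact ih (fun b hb => h b (List.mem_cons_of_mem _ hb))

lemma drv_flatten_replicate (δ : Q → α → Q) (s : Q) (b : List α) (h : drv δ s b = s) (n : ℕ) :
    drv δ s ((List.replicate n b).flatten) = s :=
  drv_flatten_loop δ s _ (fun c hc => by rw [List.eq_of_mem_replicate hc]; exact h)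

lemma sts_flatten_replicate_mem (δ : Q → α → Q) (s : Q) (b : List α) (h : drv δ s b = s)
    (n : ℕ) {y : Q} (hy : y ∈ sts δ s ((List.replicate n b).flatten)) : y ∈ sts δ s b := by
  induction n with
  | zero => simp at hy
  | succ n ih =>
    rw [List.replicate_succ, List.flatten_cons, sts_append, h] at hy
    rcases List.mem_append.mp hy with h' | h'
    · exact h'
    · exact ih h'

lemma sts_prod_fst (M₁ M₂ : DetAuto α) (p : (prodA M₁ M₂).Q) (z : List α) :
    (sts (prodA M₁ M₂).δ p z).map Prod.fst = sts M₁.δ p.1 z := by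
  induction z generalizing p with
  | nil => rfl
  | cons a z ih =>
    have hδ : ((prodA M₁ M₂).δ p a).1 = M₁.δ p.1 a := rfl
    simp only [sts_cons, List.map_cons, hδ]
    congr 1
    rw [← hδ]; exact congrArg (List.cons _) (ih ((prodA M₁ M₂).δ p a))

lemma sts_prod_snd (M₁ M₂ : DetAuto α) (p : (prodA M₁ M₂).Q) (z : List α) :
    (sts (prodA M₁ M₂).δ p z).map Prod.snd = sts M₂.δ p.2 z := by
  induction z generalizing p with
  | nil => rfl
  | cons a z ih =>
    have hδ : ((prodA M₁ M₂).δ p a).2 = M₂.δ p.2 a := rfl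
    simp only [sts_cons, List.map_cons, hδ]
    congr 1
    rw [← hδ]; exact congrArg (List.cons _) (ih ((prodA M₁ M₂).δ p a))

lemma mxC_prod_fst (M₁ M₂ : DetAuto α) (c₁ : M₁.Q → ℕ) (p : (prodA M₁ M₂).Q) (z : List α) :
    mxC (fun s => c₁ s.1) (prodA M₁ M₂).δ p z = mxC c₁ M₁.δ p.1 z := by
  unfold mxC
  rw [← sts_prod_fst M₁ M₂ p z]
  exact congrArg mx List.map_map.symm

lemma mxC_prod_snd (M₁ M₂ : DetAuto α) (c₂ : M₂.Q → ℕ) (p : (prodA M₁ M₂).Q) (z : List α) :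
    mxC (fun s => c₂ s.2) (prodA M₁ M₂).δ p z = mxC c₂ M₂.δ p.2 z := by
  unfold mxC
  rw [← sts_prod_snd M₁ M₂ p z]
  exact congrArg mx List.map_map.symm

lemma run_prefix_decomp (M : DetAuto α) {w : ℕ → α} {A B : List α}
    (h : HasPrefixWord w (A ++ B)) {t : ℕ} (ht : A.length ≤ t) (ht2 : t ≤ A.length + B.length) :
    M.run w t = drv M.δ (drv M.δ M.init A) (B.take (t - A.length)) := by
  rw [prefix_run M h (by simp; omega)]
  rw [show t = A.length + (t - A.length) by omega, List.take_length_add_append]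
  simp

lemma run_in_block (M : DetAuto α) {w : ℕ → α} {A B : List α}
    (h : HasPrefixWord w (A ++ B)) {t : ℕ} (h1 : A.length < t) (h2 : t ≤ A.length + B.length) :
    M.run w t ∈ sts M.δ (drv M.δ M.init A) B := by
  rw [run_prefix_decomp M h (by omega) h2]
  exact drv_take_mem_sts _ _ _ (by omega) (by omega)

lemma between (f : ℕ → ℕ) (hm : ∀ n, f n < f (n+1)) {t : ℕ} (h : f 0 < t) :
    ∃ n, f n < t ∧ t ≤ f (n+1) := by
  classical
  have hub : ∀ n, f 0 + n ≤ f n := by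
    intro n
    induction n with
    | zero => omega
    | succ n ih => have := hm n; omega
  have hex : ∃ n, t ≤ f (n+1) := ⟨t, by have := hub (t+1); omega⟩
  have hn := Nat.find_spec hex
  rcases hfind : Nat.find hex with _ | n
  · rw [hfind] at hn
    exact ⟨0, h, hn⟩
  · rw [hfind] at hn
    have hmin := Nat.find_min hex (show n < Nat.find hex by omega)
    push_neg at hmin
    exact ⟨n + 1, hmin, hn⟩

end Sep

namespace Sep

open Filter

variable {α : Type}

/-- the bad pattern on a pair of parity automata -/
def Bd (M₁ M₂ : DetAuto α) (c₁ : M₁.Q → ℕ) (c₂ : M₂.Q → ℕ) : Prop :=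
  ∃ x u v : List α, u ≠ [] ∧ v ≠ [] ∧
    drv M₁.δ (drv M₁.δ M₁.init x) u = drv M₁.δ M₁.init x ∧
    drv M₂.δ (drv M₂.δ M₂.init x) u = drv M₂.δ M₂.init x ∧
    drv M₁.δ (drv M₁.δ M₁.init x) v = drv M₁.δ M₁.init x ∧
    drv M₂.δ (drv M₂.δ M₂.init x) v = drv M₂.δ M₂.init x ∧
    Odd (mxC c₁ M₁.δ (drv M₁.δ M₁.init x) u) ∧
    Odd (mxC c₂ M₂.δ (drv M₂.δ M₂.init x) (u ++ v))

lemma PA_succ (x x₁ : List α) (ws : List (List α)) (n : ℕ) :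
    PA x x₁ ws (n+1) = PA x x₁ ws n ++ x₁ := by
  unfold PA
  rw [flatten_replicate_succ, ← List.append_assoc]

lemma PA_length (x x₁ : List α) (ws : List (List α)) (n : ℕ) :
    (PA x x₁ ws n).length = (x ++ ws.flatten).length + n * x₁.length := by
  unfold PA
  simp [flatten_replicate_length]
  ring

lemma map_sts_ne_nil {Q : Type} (c : Q → ℕ) (δ : Q → α → Q) (p : Q) {z : List α}
    (hz : z ≠ []) : (sts δ p z).map c ≠ [] := by
  intro h
  have h2 : z.length = 0 := by
    have := congrArg List.length h
    rwa [List.length_map, sts_length, List.length_nil] at this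
  exact hz (List.length_eq_zero_iff.mp h2)

lemma bad_to_pattern (M₁ M₂ : DetAuto α) (c₁ : M₁.Q → ℕ) (c₂ : M₂.Q → ℕ)
    (L₁ L₂ : Set (ℕ → α))
    (h₁ : ∀ y, y ∈ L₁ ↔ ParityAccept M₁ c₁ y) (h₂ : ∀ y, y ∈ L₂ ↔ ParityAccept M₂ c₂ y)
    (hbad : Bd M₁ M₂ c₁ c₂) :
    ∃ x x₁ x₂ : List α, x₁ ≠ [] ∧ x₂ ≠ [] ∧ LangA x x₁ x₂ ⊆ L₁ ∧ LangB x x₁ x₂ ⊆ L₂ := by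
  obtain ⟨x, u, v, hu, hv, l1u, l2u, l1v, l2v, hodd1, hodd2⟩ := hbad
  set q1 := drv M₁.δ M₁.init x with hq1
  set q2 := drv M₂.δ M₂.init x with hq2
  have hu1 : 1 ≤ u.length := List.length_pos_iff.mpr hu
  refine ⟨x, u, u ++ v, hu, by simp [hu], ?_, ?_⟩
  · -- LangA ⊆ L₁
    intro w hw
    obtain ⟨ws, hws, hpre⟩ := hw
    rw [h₁]
    have hbl : ∀ b ∈ ws, drv M₁.δ q1 b = q1 := by
      intro b hb
      rcases hws b hb with rfl | rfl
      · exact l1u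
      · rw [drv_append, l1u, l1v]
    have hA_drv : ∀ n, drv M₁.δ M₁.init (PA x u ws n) = q1 := by
      intro n
      unfold PA
      rw [drv_append, drv_append, ← hq1, drv_flatten_loop _ _ _ hbl,
        drv_flatten_replicate _ _ _ l1u]
    have hPApre : ∀ n, HasPrefixWord w (PA x u ws n ++ u) := by
      intro n
      rw [← PA_succ]
      exact hpre (n+1)
    have hmono : ∀ n, (PA x u ws n).length < (PA x u ws (n+1)).length := by
      intro n
      rw [PA_length, PA_length]
      nlinarith
    set m := mxC c₁ M₁.δ q1 u with hm
    refine ⟨m, hodd1, ?_, ?_⟩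
    · rw [Filter.frequently_atTop]
      intro N
      have hmem : m ∈ (sts M₁.δ q1 u).map c₁ :=
        mx_mem (map_sts_ne_nil c₁ M₁.δ q1 hu)
      obtain ⟨s, hs, hcs⟩ := List.mem_map.mp hmem
      obtain ⟨r, hr0, hru, hseq⟩ := mem_sts_drv_take _ _ _ hs
      refine ⟨(PA x u ws N).length + r, ?_, ?_⟩
      · have := PA_len x u hu ws N
        omega
      · rw [run_prefix_decomp M₁ (hPApre N) (by omega) (by omega)]
        rw [show (PA x u ws N).length + r - (PA x u ws N).length = r by omega]
        rw [hA_drv N, ← hseq, hcs]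
    · intro m' hm'
      obtain ⟨t, ht, hct⟩ := freq_ge hm' ((PA x u ws 0).length + 1)
      obtain ⟨n, hn1, hn2⟩ := between (fun n => (PA x u ws n).length) hmono (t := t) (by omega)
      have hlen2 : (PA x u ws (n+1)).length = (PA x u ws n).length + u.length := by
        rw [PA_succ, List.length_append]
      have hmem := run_in_block M₁ (hPApre n) hn1 (by omega)
      rw [hA_drv n] at hmem
      rw [← hct]
      exact le_mx (List.mem_map_of_mem (f := c₁) hmem)
  · -- LangB ⊆ L₂
    intro w hw
    obtain ⟨j, hpre⟩ := hw
    rw [h₂]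
    have hpre' : ∀ n, HasPrefixWord w (PB x u (u ++ v) j n) := hpre
    have hblk : ∀ n, PB x u (u ++ v) j (n+1)
        = (PB x u (u ++ v) j n ++ (List.replicate (j n) u).flatten) ++ (u ++ v) := by
      intro n
      rw [PB_succ, List.append_assoc]
    have hB_drv : ∀ n, drv M₂.δ M₂.init (PB x u (u ++ v) j n) = q2 := by
      intro n
      induction n with
      | zero => simp [PB, hq2]
      | succ n ih =>
        rw [hblk]
        simp only [drv_append]
        rw [ih, drv_flatten_replicate _ _ _ l2u, l2u, l2v]
    have hmono : ∀ n, (PB x u (u ++ v) j n).length < (PB x u (u ++ v) j (n+1)).length := by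
      intro n
      rw [hblk]
      simp only [List.length_append]
      omega
    set m := mxC c₂ M₂.δ q2 (u ++ v) with hm
    have hcol : ∀ n y, y ∈ sts M₂.δ q2 ((List.replicate (j n) u).flatten ++ (u ++ v)) →
        c₂ y ≤ m := by
      intro n y hy
      rw [sts_append, drv_flatten_replicate _ _ _ l2u] at hy
      have hy' : y ∈ sts M₂.δ q2 (u ++ v) := by
        rcases List.mem_append.mp hy with h' | h'
        · have := sts_flatten_replicate_mem _ _ _ l2u _ h'
          rw [sts_append]
          exact List.mem_append_left _ this
        · exact h'
      exact le_mx (List.mem_map_of_mem (f := c₂) hy')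
    refine ⟨m, hodd2, ?_, ?_⟩
    · rw [Filter.frequently_atTop]
      intro N
      have hmem : m ∈ (sts M₂.δ q2 (u ++ v)).map c₂ :=
        mx_mem (map_sts_ne_nil c₂ M₂.δ q2 (show u ++ v ≠ [] by simp [hu]))
      obtain ⟨s, hs, hcs⟩ := List.mem_map.mp hmem
      obtain ⟨r, hr0, hruv, hseq⟩ := mem_sts_drv_take _ _ _ hs
      set A := PB x u (u ++ v) j N ++ (List.replicate (j N) u).flatten with hA
      have hApre : HasPrefixWord w (A ++ (u ++ v)) := by
        rw [hA, ← hblk]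
        exact hpre' (N+1)
      have hAdrv : drv M₂.δ M₂.init A = q2 := by
        rw [hA, drv_append, hB_drv, drv_flatten_replicate _ _ _ l2u]
      refine ⟨A.length + r, ?_, ?_⟩
      · have h1 := PB_len x u (u ++ v) (show u ++ v ≠ [] by simp [hu]) j N
        have : (PB x u (u ++ v) j N).length ≤ A.length := by
          rw [hA, List.length_append]; omega
        omega
      · rw [run_prefix_decomp M₂ hApre (by omega) (by omega)]
        rw [show A.length + r - A.length = r by omega]
        rw [hAdrv, ← hseq, hcs]
    · intro m' hm'
      obtain ⟨t, ht, hct⟩ := freq_ge hm' ((PB x u (u ++ v) j 0).length + 1)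
      obtain ⟨n, hn1, hn2⟩ := between (fun n => (PB x u (u ++ v) j n).length) hmono (t := t) (by omega)
      have hlen2 : (PB x u (u ++ v) j (n+1)).length
          = (PB x u (u ++ v) j n).length + ((List.replicate (j n) u).flatten ++ (u ++ v)).length := by
        rw [hblk n]
        simp only [List.length_append]
        omega
      have hmem := run_in_block M₂
        (show HasPrefixWord w (PB x u (u ++ v) j n ++ ((List.replicate (j n) u).flatten ++ (u ++ v))) by
          rw [← List.append_assoc, ← hblk]; exact hpre' (n+1))
        hn1 (by omega)
      rw [hB_drv n] at hmem
      rw [← hct]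
      exact hcol n _ hmem

end Sep

namespace Sep

open Filter

variable {α : Type}

/-- flag predicate: there is a loop at `p` with odd `C₁`-max and `C₂`-max at most `m` -/
def Flag (P : DetAuto α) (C₁ C₂ : P.Q → ℕ) (p : P.Q) (m : ℕ) : Prop :=
  ∃ z : List α, z ≠ [] ∧ drv P.δ p z = p ∧ Odd (mxC C₁ P.δ p z) ∧ mxC C₂ P.δ p z ≤ m

/-- bad pattern phrased on a single automaton with two colorings -/
def BdP (P : DetAuto α) (C₁ C₂ : P.Q → ℕ) : Prop :=
  ∃ x u v : List α, u ≠ [] ∧ v ≠ [] ∧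
    drv P.δ (drv P.δ P.init x) u = drv P.δ P.init x ∧
    drv P.δ (drv P.δ P.init x) v = drv P.δ P.init x ∧
    Odd (mxC C₁ P.δ (drv P.δ P.init x) u) ∧
    Odd (mxC C₂ P.δ (drv P.δ P.init x) (u ++ v))

/-- update of the running max component -/
noncomputable def upd (P : DetAuto α) (C₁ C₂ : P.Q → ℕ) (K : ℕ)
    (s : P.Q × Fin (K+1)) (a : α) : Fin (K+1) :=
  open Classical in
  if Flag P C₁ C₂ s.1 s.2.1
  then ⟨min (C₂ (P.δ s.1 a)) K, by omega⟩
  else ⟨max s.2.1 (min (C₂ (P.δ s.1 a)) K), by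
    have h1 : s.2.1 < K + 1 := s.2.isLt
    have h2 : min (C₂ (P.δ s.1 a)) K < K + 1 := by omega
    omega⟩

lemma upd_pos (P : DetAuto α) (C₁ C₂ : P.Q → ℕ) (K : ℕ)
    (s : P.Q × Fin (K+1)) (a : α) (h : Flag P C₁ C₂ s.1 s.2.1) :
    (upd P C₁ C₂ K s a).1 = min (C₂ (P.δ s.1 a)) K := by
  unfold upd
  rw [if_pos h]

lemma upd_neg (P : DetAuto α) (C₁ C₂ : P.Q → ℕ) (K : ℕ)
    (s : P.Q × Fin (K+1)) (a : α) (h : ¬ Flag P C₁ C₂ s.1 s.2.1) :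
    (upd P C₁ C₂ K s a).1 = max s.2.1 (min (C₂ (P.δ s.1 a)) K) := by
  unfold upd
  rw [if_neg h]

/-- the candidate separating Büchi automaton -/
noncomputable def sepAuto (P : DetAuto α) (C₁ C₂ : P.Q → ℕ) (K : ℕ) : DetAuto α where
  Q := P.Q × Fin (K+1)
  init := (P.init, ⟨min (C₂ P.init) K, by omega⟩)
  δ := fun s a => (P.δ s.1 a, upd P C₁ C₂ K s a)

lemma sep_run_fst (P : DetAuto α) (C₁ C₂ : P.Q → ℕ) (K : ℕ) (w : ℕ → α) (n : ℕ) :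
    ((sepAuto P C₁ C₂ K).run w n).1 = P.run w n := by
  induction n with
  | zero => rfl
  | succ n ih =>
    show ((sepAuto P C₁ C₂ K).δ ((sepAuto P C₁ C₂ K).run w n) (w n)).1 = P.δ (P.run w n) (w n)
    rw [← ih]
    rfl

/-- the running-max value -/
noncomputable def mval (P : DetAuto α) (C₁ C₂ : P.Q → ℕ) (K : ℕ) (w : ℕ → α) (n : ℕ) : ℕ :=
  ((sepAuto P C₁ C₂ K).run w n).2.1

lemma sep_run_snd (P : DetAuto α) (C₁ C₂ : P.Q → ℕ) (K : ℕ) (w : ℕ → α) (n : ℕ) :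
    ((sepAuto P C₁ C₂ K).run w (n+1)).2
      = upd P C₁ C₂ K ((sepAuto P C₁ C₂ K).run w n) (w n) := rfl

lemma flag_run_iff (P : DetAuto α) (C₁ C₂ : P.Q → ℕ) (K : ℕ) (w : ℕ → α) (n : ℕ) :
    Flag P C₁ C₂ ((sepAuto P C₁ C₂ K).run w n).1 ((sepAuto P C₁ C₂ K).run w n).2.1
      ↔ Flag P C₁ C₂ (P.run w n) (mval P C₁ C₂ K w n) := by
  rw [sep_run_fst]
  rfl

lemma mval_succ_pos (P : DetAuto α) (C₁ C₂ : P.Q → ℕ) (K : ℕ) (hK : ∀ p, C₂ p ≤ K)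
    (w : ℕ → α) (n : ℕ) (hf : Flag P C₁ C₂ (P.run w n) (mval P C₁ C₂ K w n)) :
    mval P C₁ C₂ K w (n+1) = C₂ (P.run w (n+1)) := by
  unfold mval
  rw [sep_run_snd, upd_pos _ _ _ _ _ _ ((flag_run_iff P C₁ C₂ K w n).mpr hf),
    sep_run_fst]
  exact min_eq_left (hK _)

lemma mval_succ_neg (P : DetAuto α) (C₁ C₂ : P.Q → ℕ) (K : ℕ) (hK : ∀ p, C₂ p ≤ K)
    (w : ℕ → α) (n : ℕ) (hf : ¬ Flag P C₁ C₂ (P.run w n) (mval P C₁ C₂ K w n)) :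
    mval P C₁ C₂ K w (n+1) = max (mval P C₁ C₂ K w n) (C₂ (P.run w (n+1))) := by
  unfold mval
  rw [sep_run_snd, upd_neg _ _ _ _ _ _ (fun h => hf ((flag_run_iff P C₁ C₂ K w n).mp h)),
    sep_run_fst, min_eq_left (hK _)]
  rfl

lemma mval_ge (P : DetAuto α) (C₁ C₂ : P.Q → ℕ) (K : ℕ) (hK : ∀ p, C₂ p ≤ K)
    (w : ℕ → α) (n : ℕ) : C₂ (P.run w (n+1)) ≤ mval P C₁ C₂ K w (n+1) := by
  by_cases hf : Flag P C₁ C₂ (P.run w n) (mval P C₁ C₂ K w n)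
  · rw [mval_succ_pos P C₁ C₂ K hK w n hf]
  · rw [mval_succ_neg P C₁ C₂ K hK w n hf]; omega

lemma mval_mono_noflag (P : DetAuto α) (C₁ C₂ : P.Q → ℕ) (K : ℕ) (hK : ∀ p, C₂ p ≤ K)
    (w : ℕ → α) {t b : ℕ} (htb : t ≤ b)
    (hno : ∀ s, t ≤ s → s < b → ¬ Flag P C₁ C₂ (P.run w s) (mval P C₁ C₂ K w s)) :
    mval P C₁ C₂ K w t ≤ mval P C₁ C₂ K w b := by
  induction b, htb using Nat.le_induction with
  | base => exact le_refl _
  | succ b htb ih =>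
    have h1 := ih (fun s hs hsb => hno s hs (by omega))
    rw [mval_succ_neg P C₁ C₂ K hK w b (hno b htb (by omega))]
    omega

end Sep

namespace Sep

open Filter

variable {α : Type}

lemma sep_contains (P : DetAuto α) (C₁ C₂ : P.Q → ℕ) (K : ℕ) (hK : ∀ p, C₂ p ≤ K)
    (w : ℕ → α) (hw : ParityAccept P C₁ w) :
    ∃ᶠ n in atTop, Flag P C₁ C₂ (P.run w n) (mval P C₁ C₂ K w n) := by
  obtain ⟨d, hodd, hfreq, hbound⟩ := hw
  obtain ⟨N₀, hN₀⟩ := colors_le P C₁ w d hbound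
  rw [Filter.frequently_atTop]
  intro N
  have hfr : ∃ᶠ n in atTop, (C₁ (P.run w n) = d ∧ N₀ + N + 1 ≤ n) :=
    hfreq.and_eventually (Filter.eventually_ge_atTop _)
  obtain ⟨q, hq⟩ := pigeon_freq (fun n => P.run w n) _ hfr
  obtain ⟨a, _, ⟨⟨hca, haN⟩, hpa⟩⟩ := freq_ge hq 0
  obtain ⟨b, hab, ⟨⟨hcb, hbN⟩, hpb⟩⟩ := freq_ge hq (a+1)
  by_cases hflag : ∃ n, N ≤ n ∧ n ≤ b ∧ Flag P C₁ C₂ (P.run w n) (mval P C₁ C₂ K w n)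
  · obtain ⟨n, h1, _, h3⟩ := hflag
    exact ⟨n, h1, h3⟩
  exfalso
  push_neg at hflag
  have hab' : a < b := by omega
  set u := seg w a (b - a) with hu
  have hulen : u.length = b - a := seg_length w a (b-a)
  have hune : u ≠ [] := by
    intro h; rw [h] at hulen; simp at hulen; omega
  have hdrv : drv P.δ q u = q := by
    calc drv P.δ q u = drv P.δ (P.run w a) u := by rw [hpa]
    _ = P.run w b := by rw [hu, ← run_drv, show a + (b - a) = b by omega]
    _ = q := hpb
  have hmem_states : ∀ y ∈ sts P.δ q u, ∃ t, a < t ∧ t ≤ b ∧ y = P.run w t := by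
    intro y hy
    rw [← hpa] at hy
    obtain ⟨t, h1, h2, h3⟩ := sts_run_mem P w hy
    exact ⟨t, h1, by omega, h3⟩
  have hrunb_mem : P.run w b ∈ sts P.δ q u := by
    rw [hu, ← hpa]
    exact run_mem_sts P w hab' (by omega)
  have hmx1 : mxC C₁ P.δ q u = d := by
    apply mx_eq_of
    · rw [← hcb]
      exact List.mem_map_of_mem (f := C₁) hrunb_mem
    · intro col hcol
      obtain ⟨y, hy, hcy⟩ := List.mem_map.mp hcol
      obtain ⟨t, h1, h2, h3⟩ := hmem_states y hy
      rw [← hcy, h3]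
      exact hN₀ t (by omega)
  have hmx2 : mxC C₂ P.δ q u ≤ mval P C₁ C₂ K w b := by
    apply mx_le
    intro col hcol
    obtain ⟨y, hy, hcy⟩ := List.mem_map.mp hcol
    obtain ⟨t, h1, h2, h3⟩ := hmem_states y hy
    have hc2 : C₂ (P.run w t) ≤ mval P C₁ C₂ K w t := by
      obtain ⟨t', rfl⟩ : ∃ t', t = t' + 1 := ⟨t - 1, by omega⟩
      exact mval_ge P C₁ C₂ K hK w t'
    have hmono := mval_mono_noflag P C₁ C₂ K hK w (show t ≤ b by omega)
      (fun s hs hsb => hflag s (by omega) (by omega))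
    rw [← hcy, h3]
    omega
  have hfb : Flag P C₁ C₂ (P.run w b) (mval P C₁ C₂ K w b) := by
    rw [hpb]
    exact ⟨u, hune, hdrv, hmx1 ▸ hodd, hmx2⟩
  exact hflag b (by omega) (le_refl b) hfb

lemma sep_disjoint (P : DetAuto α) (C₁ C₂ : P.Q → ℕ) (K : ℕ) (hK : ∀ p, C₂ p ≤ K)
    (hnb : ¬ BdP P C₁ C₂) (w : ℕ → α)
    (hacc : ∃ᶠ n in atTop, Flag P C₁ C₂ (P.run w n) (mval P C₁ C₂ K w n))
    (hw2 : ParityAccept P C₂ w) : False := by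
  obtain ⟨d₂, hodd2, hfreq2, hbound2⟩ := hw2
  obtain ⟨N₀, hN₀⟩ := colors_le P C₂ w d₂ hbound2
  obtain ⟨t₀, ht₀, hft₀⟩ := freq_ge hacc N₀
  have hmle : ∀ n, t₀ < n → mval P C₁ C₂ K w n ≤ d₂ := by
    have key : ∀ k, mval P C₁ C₂ K w (t₀ + 1 + k) ≤ d₂ := by
      intro k
      induction k with
      | zero =>
        rw [Nat.add_zero, mval_succ_pos P C₁ C₂ K hK w t₀ hft₀]
        exact hN₀ (t₀+1) (by omega)
      | succ k ih =>
        by_cases hf : Flag P C₁ C₂ (P.run w (t₀+1+k)) (mval P C₁ C₂ K w (t₀+1+k))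
        · rw [show t₀+1+(k+1) = (t₀+1+k)+1 by ring, mval_succ_pos P C₁ C₂ K hK _ _ hf]
          exact hN₀ _ (by omega)
        · rw [show t₀+1+(k+1) = (t₀+1+k)+1 by ring, mval_succ_neg P C₁ C₂ K hK _ _ hf]
          have := hN₀ (t₀+1+k+1) (by omega)
          omega
    intro n hn
    have := key (n - t₀ - 1)
    rwa [show t₀+1+(n-t₀-1) = n by omega] at this
  have hfr : ∃ᶠ n in atTop,
      (Flag P C₁ C₂ (P.run w n) (mval P C₁ C₂ K w n) ∧ t₀ + 1 ≤ n) :=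
    hacc.and_eventually (Filter.eventually_ge_atTop _)
  obtain ⟨q, hq⟩ := pigeon_freq (fun n => P.run w n) _ hfr
  obtain ⟨n₁, _, ⟨⟨hfl1, hn₁⟩, hp1⟩⟩ := freq_ge hq 0
  rw [hp1] at hfl1
  obtain ⟨z, hzne, hzloop, hzodd, hzle⟩ := hfl1
  have hz2 : mxC C₂ P.δ q z ≤ d₂ := le_trans hzle (hmle n₁ (by omega))
  obtain ⟨a, han, ⟨⟨_, haN⟩, hpa⟩⟩ := freq_ge hq (n₁+1)
  obtain ⟨s, hs, hcs⟩ := freq_ge hfreq2 (a+1)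
  obtain ⟨b, hb, ⟨⟨_, _⟩, hpb⟩⟩ := freq_ge hq (s+1)
  have hab' : a < b := by omega
  set v := seg w a (b - a) with hv
  have hvlen : v.length = b - a := seg_length w a (b-a)
  have hvne : v ≠ [] := by
    intro h; rw [h] at hvlen; simp at hvlen; omega
  have hvdrv : drv P.δ q v = q := by
    calc drv P.δ q v = drv P.δ (P.run w a) v := by rw [hpa]
    _ = P.run w b := by rw [hv, ← run_drv, show a + (b - a) = b by omega]
    _ = q := hpb
  have hmem_states : ∀ y ∈ sts P.δ q v, ∃ t, a < t ∧ t ≤ b ∧ y = P.run w t := by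
    intro y hy
    rw [← hpa] at hy
    obtain ⟨t, h1, h2, h3⟩ := sts_run_mem P w hy
    exact ⟨t, h1, by omega, h3⟩
  have hmxv : mxC C₂ P.δ q v = d₂ := by
    apply mx_eq_of
    · rw [← hcs]
      apply List.mem_map_of_mem (f := C₂)
      rw [hv, ← hpa]
      exact run_mem_sts P w (show a < s by omega) (by omega)
    · intro col hcol
      obtain ⟨y, hy, hcy⟩ := List.mem_map.mp hcol
      obtain ⟨t, h1, h2, h3⟩ := hmem_states y hy
      rw [← hcy, h3]
      exact hN₀ t (by omega)
  apply hnb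
  refine ⟨seg w 0 n₁, z, v, hzne, hvne, ?_⟩
  have hreach : drv P.δ P.init (seg w 0 n₁) = q := by
    rw [← run_eq_drv, hp1]
  rw [hreach]
  refine ⟨hzloop, hvdrv, hzodd, ?_⟩
  rw [mxC_append, hzloop, hmxv, max_eq_right hz2]
  exact hodd2

end Sep

namespace Sep

open Filter

variable {α : Type}

lemma parity_prod_fst (M₁ M₂ : DetAuto α) (c₁ : M₁.Q → ℕ) (w : ℕ → α) :
    ParityAccept M₁ c₁ w ↔ ParityAccept (prodA M₁ M₂) (fun s => c₁ s.1) w := by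
  unfold ParityAccept
  simp only [prodA_run]

lemma parity_prod_snd (M₁ M₂ : DetAuto α) (c₂ : M₂.Q → ℕ) (w : ℕ → α) :
    ParityAccept M₂ c₂ w ↔ ParityAccept (prodA M₁ M₂) (fun s => c₂ s.2) w := by
  unfold ParityAccept
  simp only [prodA_run]

lemma BdP_to_Bd (M₁ M₂ : DetAuto α) (c₁ : M₁.Q → ℕ) (c₂ : M₂.Q → ℕ)
    (h : BdP (prodA M₁ M₂) (fun s => c₁ s.1) (fun s => c₂ s.2)) : Bd M₁ M₂ c₁ c₂ := by
  obtain ⟨x, u, v, hu, hv, hlu, hlv, ho1, ho2⟩ := h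
  set P := prodA M₁ M₂ with hP
  set q := drv P.δ P.init x with hq
  have hq1 : q.1 = drv M₁.δ M₁.init x := by
    rw [hq, prodA_drv_fst]; rfl
  have hq2 : q.2 = drv M₂.δ M₂.init x := by
    rw [hq, prodA_drv_snd]; rfl
  refine ⟨x, u, v, hu, hv, ?_, ?_, ?_, ?_, ?_, ?_⟩
  · rw [← hq1]
    have := congrArg Prod.fst hlu
    rwa [prodA_drv_fst] at this
  · rw [← hq2]
    have := congrArg Prod.snd hlu
    rwa [prodA_drv_snd] at this
  · rw [← hq1]
    have := congrArg Prod.fst hlv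
    rwa [prodA_drv_fst] at this
  · rw [← hq2]
    have := congrArg Prod.snd hlv
    rwa [prodA_drv_snd] at this
  · rw [← hq1, ← mxC_prod_fst M₁ M₂ c₁ q u]
    exact ho1
  · rw [← hq2, ← mxC_prod_snd M₁ M₂ c₂ q (u ++ v)]
    exact ho2

lemma notbad_sep (M₁ M₂ : DetAuto α) (c₁ : M₁.Q → ℕ) (c₂ : M₂.Q → ℕ)
    (L₁ L₂ : Set (ℕ → α))
    (h₁ : ∀ y, y ∈ L₁ ↔ ParityAccept M₁ c₁ y) (h₂ : ∀ y, y ∈ L₂ ↔ ParityAccept M₂ c₂ y)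
    (hnb : ¬ Bd M₁ M₂ c₁ c₂) : DBWSeparable L₁ L₂ := by
  set P := prodA M₁ M₂ with hP
  set C₁ : P.Q → ℕ := fun s => c₁ s.1 with hC₁
  set C₂ : P.Q → ℕ := fun s => c₂ s.2 with hC₂
  set K := Finset.univ.sup c₂ with hKdef
  have hK : ∀ p : P.Q, C₂ p ≤ K := fun p => Finset.le_sup (Finset.mem_univ p.2)
  set accS : Set (sepAuto P C₁ C₂ K).Q := {s | Flag P C₁ C₂ s.1 s.2.1} with haccS
  refine ⟨{y | ∃ᶠ n in atTop, (sepAuto P C₁ C₂ K).run y n ∈ accS},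
    ⟨sepAuto P C₁ C₂ K, accS, fun y => Iff.rfl⟩, ?_, ?_⟩
  · intro w hw
    have hp : ParityAccept P C₁ w := (parity_prod_fst M₁ M₂ c₁ w).mp ((h₁ w).mp hw)
    have hfl := sep_contains P C₁ C₂ K hK w hp
    exact hfl.mono (fun n h => (flag_run_iff P C₁ C₂ K w n).mpr h)
  · rw [Set.eq_empty_iff_forall_notMem]
    rintro w ⟨hwL, hwL₂⟩
    have hacc : ∃ᶠ n in atTop, Flag P C₁ C₂ (P.run w n) (mval P C₁ C₂ K w n) :=
      hwL.mono (fun n h => (flag_run_iff P C₁ C₂ K w n).mp h)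
    exact sep_disjoint P C₁ C₂ K hK (fun hb => hnb (BdP_to_Bd M₁ M₂ c₁ c₂ hb)) w hacc
      ((parity_prod_snd M₁ M₂ c₂ w).mp ((h₂ w).mp hwL₂))

end Sep


/-- Two ω-regular languages `L₁, L₂` are not DBW-separable iff there are finite words
`x ∈ Σ*`, `x₁, x₂ ∈ Σ⁺` with `x·(x₁+x₂)*·x₁^ω ⊆ L₁` and `x·(x₁*·x₂)^ω ⊆ L₂`. -/
theorem stmt_11 {Sig : Type} [Fintype Sig] (L₁ L₂ : Set (ℕ → Sig))
    (h₁ : OmegaRegular L₁) (h₂ : OmegaRegular L₂) :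
    ¬ DBWSeparable L₁ L₂ ↔
      ∃ x x₁ x₂ : List Sig, x₁ ≠ [] ∧ x₂ ≠ [] ∧
        LangA x x₁ x₂ ⊆ L₁ ∧ LangB x x₁ x₂ ⊆ L₂ := by
  obtain ⟨M₁, c₁, h₁⟩ := h₁
  obtain ⟨M₂, c₂, h₂⟩ := h₂
  constructor
  · intro hns
    by_cases hbad : Sep.Bd M₁ M₂ c₁ c₂
    · exact Sep.bad_to_pattern M₁ M₂ c₁ c₂ L₁ L₂ h₁ h₂ hbad
    · exact absurd (Sep.notbad_sep M₁ M₂ c₁ c₂ L₁ L₂ h₁ h₂ hbad) hns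
  · rintro ⟨x, x₁, x₂, hx₁, hx₂, hA, hB⟩ ⟨L, ⟨M, acc, hM⟩, hL₁, hL₂⟩
    exact Sep.pattern_not_sep x x₁ x₂ hx₁ hx₂ L₁ L₂ L hA hB M acc hM hL₁ hL₂
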